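/- For every real c with 0 < c ≤ 1, the series ∑_{n=0}^∞ P_n(c) converges and its sum is at most 7/(2·√c). -/

import Mathlib

/-- Partial product `P n c = ∏_{j=1}^{n} 1/(1 + j·c)`, with `P 0 c = 1`. -/
noncomputable def partialProd (n : ℕ) (c : ℝ) : ℝ :=
  ∏ j ∈ Finset.Icc 1 n, (1 + (j : ℝ) * c)⁻¹

lemma partialProd_pos (n : ℕ) (c : ℝ) (hc : 0 < c) : 0 < partialProd n c := by
  unfold partialProd
  apply Finset.prod_pos
  intro j hj
  have : (0:ℝ) < 1 + (j:ℝ) * c := by positivity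
  exact inv_pos.mpr this

lemma partialProd_le_one (n : ℕ) (c : ℝ) (hc : 0 < c) : partialProd n c ≤ 1 := by
  unfold partialProd
  apply Finset.prod_le_one
  · intro j hj
    have : (0:ℝ) < 1 + (j:ℝ) * c := by positivity
    positivity
  · intro j hj
    have h1 : (1:ℝ) ≤ 1 + (j:ℝ) * c := by
      have : (0:ℝ) ≤ (j:ℝ) * c := by positivity
      linarith
    exact inv_le_one_of_one_le₀ h1

set_option maxHeartbeats 1000000 in
theorem statement11 (c : ℝ) (hc0 : 0 < c) (hc1 : c ≤ 1) :
    Summable (fun n : ℕ => partialProd n c) ∧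
      (∑' n : ℕ, partialProd n c) ≤ 7 / (2 * Real.sqrt c) := by
  set s := Real.sqrt c with hs_def
  have hs0 : 0 < s := Real.sqrt_pos.mpr hc0
  have hs1 : s ≤ 1 := Real.sqrt_le_one.mpr hc1
  have hsc : s * s = c := Real.mul_self_sqrt hc0.le
  obtain ⟨m, hm_le, hm_gt⟩ : ∃ m : ℕ, (m:ℝ) ≤ 1/s ∧ 1/s < (m:ℝ) + 1 :=
    ⟨⌊1/s⌋₊, Nat.floor_le (by positivity), Nat.lt_floor_add_one _⟩
  set r : ℝ := (1 + s)⁻¹ with hr_def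
  have hr0 : 0 < r := by positivity
  have hr1 : r < 1 := by
    rw [hr_def, inv_lt_one_iff₀]; right; linarith
  -- key tail bound
  have key : ∀ n, m ≤ n → partialProd n c ≤ r ^ (n - m) := by
    intro n hn
    have hsplit : partialProd n c =
        partialProd m c * ∏ j ∈ Finset.Ioc m n, (1 + (j:ℝ) * c)⁻¹ := by
      unfold partialProd
      rw [show Finset.Icc 1 n = Finset.Ioc 0 n from rfl,
          show Finset.Icc 1 m = Finset.Ioc 0 m from rfl]
      exact (Finset.prod_Ioc_consecutive _ (Nat.zero_le m) hn).symm
    rw [hsplit]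
    have htail : ∏ j ∈ Finset.Ioc m n, (1 + (j:ℝ) * c)⁻¹ ≤ r ^ (n - m) := by
      have hcard : (Finset.Ioc m n).card = n - m := Nat.card_Ioc m n
      calc ∏ j ∈ Finset.Ioc m n, (1 + (j:ℝ) * c)⁻¹
          ≤ ∏ _j ∈ Finset.Ioc m n, r := by
            apply Finset.prod_le_prod
            · intro j hj
              have : (0:ℝ) < 1 + (j:ℝ) * c := by positivity
              positivity
            · intro j hj
              have hj' : m + 1 ≤ j := (Finset.mem_Ioc.mp hj).1
              have hjr : (m:ℝ) + 1 ≤ (j:ℝ) := by exact_mod_cast hj'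
              have hjs : s ≤ (j:ℝ) * c := by
                have h1 : 1/s ≤ (j:ℝ) := le_trans hm_gt.le hjr
                have : (1/s) * c ≤ (j:ℝ) * c := by
                  apply mul_le_mul_of_nonneg_right h1 hc0.le
                have hcs : (1/s) * c = s := by
                  field_simp
                  linarith [hsc]
                linarith
              rw [hr_def]
              apply inv_anti₀ (by positivity)
              linarith
        _ = r ^ (n - m) := by rw [Finset.prod_const, hcard]
    have h1 : partialProd m c ≤ 1 := partialProd_le_one m c hc0
    have h2 : 0 ≤ ∏ j ∈ Finset.Ioc m n, (1 + (j:ℝ) * c)⁻¹ := by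
      apply Finset.prod_nonneg
      intro j hj
      have : (0:ℝ) < 1 + (j:ℝ) * c := by positivity
      positivity
    nlinarith [partialProd_pos m c hc0]
  -- summability
  have hgeo : Summable (fun k : ℕ => r ^ k) := summable_geometric_of_lt_one hr0.le hr1
  have hsum' : Summable (fun k : ℕ => partialProd (k + m) c) := by
    apply Summable.of_nonneg_of_le
    · intro k; exact (partialProd_pos _ c hc0).le
    · intro k
      have := key (k + m) (Nat.le_add_left m k)
      simpa using this
    · exact hgeo
  have hsum : Summable (fun n : ℕ => partialProd n c) := by
    rw [← summable_nat_add_iff m]; exact hsum'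
  refine ⟨hsum, ?_⟩
  -- split the sum
  rw [← hsum.sum_add_tsum_nat_add m]
  have hhead : ∑ i ∈ Finset.range m, partialProd i c ≤ (m:ℝ) := by
    calc ∑ i ∈ Finset.range m, partialProd i c
        ≤ ∑ _i ∈ Finset.range m, (1:ℝ) :=
          Finset.sum_le_sum (fun i _ => partialProd_le_one i c hc0)
      _ = (m:ℝ) := by simp
  have htailsum : (∑' k : ℕ, partialProd (k + m) c) ≤ (1 - r)⁻¹ := by
    have h1 : (∑' k : ℕ, partialProd (k + m) c) ≤ ∑' k : ℕ, r ^ k := by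
      apply Summable.tsum_le_tsum
      · intro k
        have := key (k + m) (Nat.le_add_left m k)
        simpa using this
      · exact hsum'
      · exact hgeo
    rw [tsum_geometric_of_lt_one hr0.le hr1] at h1
    exact h1
  have hinv : (1 - r)⁻¹ = 1/s + 1 := by
    rw [hr_def]
    have h1 : (1:ℝ) + s ≠ 0 := by positivity
    field_simp
    rw [add_sub_cancel_left, div_self hs0.ne']
  rw [hinv] at htailsum
  have h3 : (7:ℝ) / (2 * s) = 7 / 2 * (1/s) := by ring
  have h1s : (1:ℝ) ≤ 1/s := by
    rw [le_div_iff₀ hs0]; linarith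
  calc (∑ i ∈ Finset.range m, partialProd i c) + ∑' k : ℕ, partialProd (k + m) c
      ≤ (m:ℝ) + (1/s + 1) := by linarith
    _ ≤ 1/s + (1/s + 1/s) := by linarith
    _ ≤ 7 / (2 * s) := by rw [h3]; linarith
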